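/- For every argumentation framework F, every icft-extension (tfcf2-extension) of F is a naive extension of F; consequently, the icft semantics satisfies I-maximality: if S₁ and S₂ are icft-extensions of F with S₁ ⊆ S₂, then S₁ = S₂. -/

import Mathlib

/-!
Basic notions of abstract argumentation frameworks, following
Andrews–San Mauro, "SCC-recursiveness in infinite argumentation".
-/

universe u

/-- An argumentation framework: a set `A` of arguments together with an
attack relation `R ⊆ A × A`. -/
structure AF (α : Type u) where
  A : Set α
  R : α → α → Prop
  attack_mem : ∀ ⦃a b : α⦄, R a b → a ∈ A ∧ b ∈ A

namespace AF

variable {α : Type u}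

/-- The restriction `F↾U = (A ∩ U, R ∩ (U × U))`. -/
def restrict (F : AF α) (U : Set α) : AF α where
  A := F.A ∩ U
  R a b := F.R a b ∧ a ∈ U ∧ b ∈ U
  attack_mem := by
    intro a b h
    exact ⟨⟨(F.attack_mem h.1).1, h.2.1⟩, ⟨(F.attack_mem h.1).2, h.2.2⟩⟩

/-- `S` is conflict-free: `S ⊆ A` and no argument of `S` attacks another. -/
def ConflictFree (F : AF α) (S : Set α) : Prop :=
  S ⊆ F.A ∧ ∀ a ∈ S, ∀ b ∈ S, ¬ F.R a b

/-- `S` is a naive extension: conflict-free and ⊆-maximal among conflict-free sets. -/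
def Naive (F : AF α) (S : Set α) : Prop :=
  ConflictFree F S ∧ ∀ T, ConflictFree F T → S ⊆ T → S = T

/-- `S⁺`: the set of arguments attacked by `S`. -/
def plus (F : AF α) (S : Set α) : Set α := {x | ∃ y ∈ S, F.R y x}

/-- The range `S⊕ = S ∪ S⁺`. -/
def rng (F : AF α) (S : Set α) : Set α := S ∪ plus F S

/-- `S` is a stage extension: conflict-free with ⊆-maximal range among
conflict-free sets. -/
def Stage (F : AF α) (S : Set α) : Prop :=
  ConflictFree F S ∧ ¬ ∃ T, ConflictFree F T ∧ rng F S ⊂ rng F T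

/-- `F` is finitary: every argument has finitely many attackers. -/
def Finitary (F : AF α) : Prop := ∀ a, {x | F.R x a}.Finite

/-- There is a directed path from `a` to `b` in `F` (both being arguments of `F`). -/
def Reach (F : AF α) (a b : α) : Prop :=
  a ∈ F.A ∧ b ∈ F.A ∧ Relation.ReflTransGen F.R a b

/-- The strongly connected component of `a` in `F`. -/
def SCCof (F : AF α) (a : α) : Set α := {b | Reach F a b ∧ Reach F b a}

/-- `X` is a strongly connected component of `F`. -/
def IsSCC (F : AF α) (X : Set α) : Prop := ∃ a ∈ F.A, X = SCCof F a

/-- `D_S(X)`: the elements of `X` attacked by an element of `S` outside `X`. -/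
def Dset (F : AF α) (S X : Set α) : Set α := {b ∈ X | ∃ a ∈ S \ X, F.R a b}

/-- `S` is a cf1.5-extension of `F`. -/
def CF15 (F : AF α) (S : Set α) : Prop :=
  ConflictFree F S ∧
    ∀ X, IsSCC F X → Naive (F.restrict (X \ Dset F S X)) (S ∩ X)

/-- `S` is a stg1.5-extension of `F`. -/
def STG15 (F : AF α) (S : Set α) : Prop :=
  ConflictFree F S ∧
    ∀ X, IsSCC F X → Stage (F.restrict (X \ Dset F S X)) (S ∩ X)

/-- `C_S^α(a)`, defined by transfinite recursion. -/
noncomputable def Cseq (F : AF α) (S : Set α) (a : α) (o : Ordinal.{0}) : Set α :=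
  Ordinal.limitRecOn o (SCCof F a)
    (fun _ C => SCCof (F.restrict (C \ Dset F S C)) a)
    (fun o' _ ih => SCCof (F.restrict (⋂ β : {β : Ordinal.{0} // β < o'}, ih β.1 β.2)) a)

/-- The component ordinal `α_S(a)`: the least `α` with `a ∉ C_S^α(a)` or
`C_S^{α+1}(a) = C_S^α(a)`. -/
noncomputable def alphaS (F : AF α) (S : Set α) (a : α) : Ordinal.{0} :=
  sInf {o | a ∉ Cseq F S a o ∨ Cseq F S a (o + 1) = Cseq F S a o}

/-- `S` is an icft-extension (tfcf2-extension) of `F`. -/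
def ICFT (F : AF α) (S : Set α) : Prop :=
  ConflictFree F S ∧ ∀ a ∈ F.A,
    a ∉ Cseq F S a (alphaS F S a) ∨
      Naive (F.restrict (Cseq F S a (alphaS F S a))) (S ∩ Cseq F S a (alphaS F S a))

/-- `S` is an istgt-extension (tf-stg2-extension) of `F`. -/
def ISTGT (F : AF α) (S : Set α) : Prop :=
  ConflictFree F S ∧ ∀ a ∈ F.A,
    a ∉ Cseq F S a (alphaS F S a) ∨
      Stage (F.restrict (Cseq F S a (alphaS F S a))) (S ∩ Cseq F S a (alphaS F S a))

/-- The characteristic function `f_F`. -/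
def charF (F : AF α) (S : Set α) : Set α :=
  {x ∈ F.A | ∀ y, F.R y x → ∃ z ∈ S, F.R z y}

/-- `G` is the grounded extension of `F`: the least fixed point of `f_F`. -/
def IsGrounded (F : AF α) (G : Set α) : Prop :=
  charF F G = G ∧ ∀ T, charF F T = T → G ⊆ T

/-- `conf(F)`: the set of conflicting pairs of `F`. -/
def confl (F : AF α) : Set (α × α) := {p | F.R p.1 p.2 ∨ F.R p.2 p.1}

/-- The operator `Δ_{F,S}(D)`. -/
def DeltaOp (F : AF α) (S D : Set α) : Set α :=
  {a ∈ F.A | ∃ b ∈ S, F.R b a ∧ ¬ Reach (F.restrict (F.A \ D)) a b}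

/-- `Δ^α_{F,S}`, defined by transfinite recursion. -/
noncomputable def Deltaseq (F : AF α) (S : Set α) (o : Ordinal.{0}) : Set α :=
  Ordinal.limitRecOn o (∅ : Set α)
    (fun _ D => DeltaOp F S D)
    (fun o' _ ih => ⋃ β : {β : Ordinal.{0} // β < o'}, ih β.1 β.2)

/-- The least fixed point `Δ_{F,S}` of the monotone operator `Δ_{F,S}(·)`,
given by Knaster–Tarski as the intersection of all prefixed points. -/
def DeltaFix (F : AF α) (S : Set α) : Set α :=
  ⋂₀ {D | DeltaOp F S D ⊆ D}

end AF

/-- every icft-extension is naive; hence icft satisfies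
I-maximality. -/
lemma mem_SCCof_self {α : Type u} {G : AF α} {a : α} (h : a ∈ G.A) : a ∈ AF.SCCof G a :=
  ⟨⟨h, h, Relation.ReflTransGen.refl⟩, ⟨h, h, Relation.ReflTransGen.refl⟩⟩

lemma mem_Cseq_all {α : Type u} (F : AF α) (S : Set α) (a : α) (hA : a ∈ F.A)
    (hna : ∀ s ∈ S, ¬ F.R s a) : ∀ o : Ordinal.{0}, a ∈ AF.Cseq F S a o := by
  intro o
  induction o using Ordinal.limitRecOn with
  | zero =>
      rw [AF.Cseq, Ordinal.limitRecOn_zero]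
      exact mem_SCCof_self hA
  | add_one o ih =>
      rw [AF.Cseq, Ordinal.limitRecOn_add_one]
      refine mem_SCCof_self ?_
      refine ⟨hA, ?_, ?_⟩
      · exact ih
      · rintro ⟨-, s, ⟨hsS, -⟩, hR⟩
        exact hna s hsS hR
  | limit o ho ih =>
      rw [AF.Cseq, Ordinal.limitRecOn_limit _ _ _ _ ho]
      refine mem_SCCof_self ⟨hA, ?_⟩
      exact Set.mem_iInter.mpr fun β => ih β.1 β.2

theorem statement9 {α : Type u} (F : AF α) :
    (∀ S, AF.ICFT F S → AF.Naive F S) ∧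
      ∀ S₁ S₂, AF.ICFT F S₁ → AF.ICFT F S₂ → S₁ ⊆ S₂ → S₁ = S₂ := by
  have key : ∀ S, AF.ICFT F S → AF.Naive F S := by
    intro S hS
    obtain ⟨hcf, hmax⟩ := hS
    refine ⟨hcf, ?_⟩
    intro T hT hST
    refine Set.Subset.antisymm hST fun a haT => ?_
    by_contra haS
    have haA : a ∈ F.A := hT.1 haT
    have hna : ∀ s ∈ S, ¬ F.R s a := fun s hs => hT.2 s (hST hs) a haT
    have hmem : a ∈ AF.Cseq F S a (AF.alphaS F S a) := mem_Cseq_all F S a haA hna _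
    rcases hmax a haA with h | hnaive
    · exact h hmem
    set C := AF.Cseq F S a (AF.alphaS F S a) with hC
    have hcf' : AF.ConflictFree (F.restrict C) (insert a (S ∩ C)) := by
      constructor
      · rintro x (rfl | ⟨hxS, hxC⟩)
        · exact ⟨haA, hmem⟩
        · exact ⟨hcf.1 hxS, hxC⟩
      · intro x hx y hy hRxy
        have hR : F.R x y := hRxy.1
        have hxT : x ∈ T := by
          rcases hx with rfl | ⟨hxS, -⟩
          · exact haT
          · exact hST hxS
        have hyT : y ∈ T := by
          rcases hy with rfl | ⟨hyS, -⟩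
          · exact haT
          · exact hST hyS
        exact hT.2 x hxT y hyT hR
    have heq := hnaive.2 (insert a (S ∩ C)) hcf' (Set.subset_insert _ _)
    have : a ∈ S ∩ C := heq ▸ Set.mem_insert a _
    exact haS this.1
  refine ⟨key, fun S₁ S₂ h₁ h₂ hsub => (key S₁ h₁).2 S₂ h₂.1 hsub⟩
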